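/- arXiv:1402.0674 — 2 statements merged into one kernel-verified Lean document; each statement's English description precedes it below -/
import Mathlib

section
/- Let (X,d) be a compact metric space and f : X → X an expansive homeomorphism. Then f is topologically mixing and has the shadowing property if and only if f has the two-sided limit shadowing property. -/
open Filter Topology

set_option maxHeartbeats 1000000

variable {X : Type*} [MetricSpace X]

/-- `f` is expansive, with some expansivity constant `ε > 0`. -/
def Expansive (f : X ≃ X) : Prop :=
  ∃ ε : ℝ, 0 < ε ∧ ∀ x y : X, (∀ n : ℤ, dist ((f ^ n) x) ((f ^ n) y) ≤ ε) → x = y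

/-- `g` is topologically mixing. -/
def TopologicallyMixing (g : X → X) : Prop :=
  ∀ U V : Set X, IsOpen U → IsOpen V → U.Nonempty → V.Nonempty →
    ∃ N : ℕ, ∀ n : ℕ, N ≤ n → (g^[n] '' U ∩ V).Nonempty

/-- The (two-sided) shadowing property for a bijection `f`. -/
def ShadowingPropertyZ (f : X ≃ X) : Prop :=
  ∀ ε : ℝ, 0 < ε → ∃ δ : ℝ, 0 < δ ∧ ∀ x : ℤ → X,
    (∀ i : ℤ, dist (f (x i)) (x (i + 1)) < δ) →
    ∃ y : X, ∀ i : ℤ, dist ((f ^ i) y) (x i) < ε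

/-- A two-sided limit pseudo-orbit: `d(f(x i), x (i+1)) → 0` as `|i| → ∞`. -/
def IsTwoSidedLimitPseudoOrbit (f : X ≃ X) (x : ℤ → X) : Prop :=
  Tendsto (fun i : ℤ => dist (f (x i)) (x (i + 1))) cofinite (𝓝 0)

/-- `f` has the two-sided limit shadowing property. -/
def TwoSidedLimitShadowing (f : X ≃ X) : Prop :=
  ∀ x : ℤ → X, IsTwoSidedLimitPseudoOrbit f x →
    ∃ y : X, Tendsto (fun i : ℤ => dist ((f ^ i) y) (x i)) cofinite (𝓝 0)

namespace TSLSProof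

variable (f : X ≃ₜ X)

lemma step_orbit (i : ℤ) (a : X) : f ((f.toEquiv ^ i) a) = (f.toEquiv ^ (i + 1)) a := by
  have : f.toEquiv ^ (i + 1) = f.toEquiv * f.toEquiv ^ i := by
    rw [add_comm, zpow_add, zpow_one]
  rw [this, Equiv.Perm.mul_apply]; rfl

lemma pow_add_apply (m n : ℤ) (a : X) :
    (f.toEquiv ^ (m + n)) a = (f.toEquiv ^ m) ((f.toEquiv ^ n) a) := by
  rw [zpow_add, Equiv.Perm.mul_apply]

lemma iterate_eq_pow (n : ℕ) (a : X) : (⇑f)^[n] a = (f.toEquiv ^ (n : ℤ)) a := by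
  rw [zpow_natCast, Equiv.Perm.coe_pow]; rfl

lemma continuous_pow (n : ℤ) : Continuous ⇑(f.toEquiv ^ n) := by
  induction n using Int.induction_on with
  | zero => simpa using continuous_id
  | succ m ih =>
      have h : f.toEquiv ^ ((m : ℤ) + 1) = f.toEquiv * f.toEquiv ^ (m : ℤ) := by
        rw [← zpow_one_add]; ring_nf
      rw [h]
      simpa [Equiv.Perm.mul_apply] using f.continuous.comp ih
  | pred m ih =>
      have h : f.toEquiv ^ (-(m : ℤ) - 1) = f.toEquiv⁻¹ * f.toEquiv ^ (-(m : ℤ)) := by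
        rw [← zpow_neg_one, ← zpow_add]; ring_nf
      rw [h]
      have hc : Continuous ⇑(f.toEquiv⁻¹) := f.symm.continuous
      simpa [Equiv.Perm.mul_apply] using hc.comp ih

variable [CompactSpace X]

lemma uniformContinuous_pow (n : ℤ) : UniformContinuous ⇑(f.toEquiv ^ n) :=
  CompactSpace.uniformContinuous_of_continuous (continuous_pow f n)

/-- modulus of continuity for `E n` -/
lemma modulus (n : ℤ) {ε : ℝ} (hε : 0 < ε) :
    ∃ δ : ℝ, 0 < δ ∧ ∀ x y : X, dist x y < δ →
      dist ((f.toEquiv ^ n) x) ((f.toEquiv ^ n) y) < ε := by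
  have := Metric.uniformContinuous_iff.1 (uniformContinuous_pow f n) ε hε
  obtain ⟨δ, hδ, h⟩ := this
  exact ⟨δ, hδ, fun x y hxy => h hxy⟩

lemma modulus_f {ε : ℝ} (hε : 0 < ε) :
    ∃ δ : ℝ, 0 < δ ∧ δ ≤ ε ∧ ∀ x y : X, dist x y < δ → dist (f x) (f y) < ε := by
  obtain ⟨δ, hδ, h⟩ := modulus f 1 hε
  refine ⟨min δ ε, lt_min hδ hε, min_le_right _ _, fun x y hxy => ?_⟩
  have := h x y (lt_of_lt_of_le hxy (min_le_left _ _))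
  simpa [zpow_one] using this

lemma subseq_limit (x : ℕ → X) :
    ∃ a : X, ∃ φ : ℕ → ℕ, StrictMono φ ∧ Tendsto (x ∘ φ) atTop (𝓝 a) := by
  obtain ⟨a, -, φ, hφ, ht⟩ := isCompact_univ.tendsto_subseq (x := x) (fun n => trivial)
  exact ⟨a, φ, hφ, ht⟩

/-- Uniform expansivity -/
lemma unif_exp (c : ℝ)
    (hexp : ∀ x y : X, (∀ n : ℤ, dist ((f.toEquiv ^ n) x) ((f.toEquiv ^ n) y) ≤ c) → x = y)
    {ε : ℝ} (hε : 0 < ε) :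
    ∃ N : ℕ, ∀ x y : X,
      (∀ n : ℤ, |n| ≤ (N : ℤ) → dist ((f.toEquiv ^ n) x) ((f.toEquiv ^ n) y) ≤ c) →
      dist x y ≤ ε := by
  by_contra hcon
  push_neg at hcon
  choose xs ys hw hd using hcon
  obtain ⟨a, φ, hφ, ha⟩ := subseq_limit xs
  obtain ⟨b, ψ, hψ, hb⟩ := subseq_limit (ys ∘ φ)
  set u : ℕ → X := fun k => xs (φ (ψ k)) with hu
  set v : ℕ → X := fun k => ys (φ (ψ k)) with hv
  have hua : Tendsto u atTop (𝓝 a) := ha.comp hψ.tendsto_atTop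
  have hvb : Tendsto v atTop (𝓝 b) := hb
  have hab : a = b := by
    apply hexp
    intro n
    have hten : Tendsto (fun k => dist ((f.toEquiv ^ n) (u k)) ((f.toEquiv ^ n) (v k)))
        atTop (𝓝 (dist ((f.toEquiv ^ n) a) ((f.toEquiv ^ n) b))) := by
      exact (((continuous_pow f n).tendsto a).comp hua).dist
        (((continuous_pow f n).tendsto b).comp hvb)
    refine le_of_tendsto hten ?_
    filter_upwards [eventually_ge_atTop n.natAbs] with k hk
    apply hw
    have h1 : k ≤ φ (ψ k) := le_trans (hψ.id_le k) (hφ.id_le (ψ k))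
    have h2 : n.natAbs ≤ φ (ψ k) := le_trans hk h1
    rw [Int.abs_eq_natAbs]
    exact_mod_cast h2
  have hdist : Tendsto (fun k => dist (u k) (v k)) atTop (𝓝 (dist a b)) := hua.dist hvb
  have : ε ≤ dist a b := by
    refine ge_of_tendsto hdist ?_
    filter_upwards with k using (hd (φ (ψ k))).le
  rw [hab, dist_self] at this
  exact absurd (lt_of_lt_of_le hε this) (lt_irrefl 0)

/-- shadowing of all finite pseudo-orbits -/
def FiniteSh : Prop :=
  ∀ ε : ℝ, 0 < ε → ∃ δ : ℝ, 0 < δ ∧ ∀ (x : ℕ → X) (L : ℕ),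
    (∀ i : ℕ, i < L → dist (f (x i)) (x (i + 1)) < δ) →
    ∃ y : X, ∀ i : ℕ, i ≤ L → dist ((f.toEquiv ^ (i : ℤ)) y) (x i) < ε

lemma shadowing_of_finite (h : FiniteSh f) : ShadowingPropertyZ f.toEquiv := by
  intro ε hε
  obtain ⟨δ, hδ, hfin⟩ := h (ε / 2) (by positivity)
  refine ⟨δ, hδ, fun x hx => ?_⟩
  have key : ∀ n : ℕ, ∃ y : X, ∀ j : ℤ, |j| ≤ (n : ℤ) →
      dist ((f.toEquiv ^ j) y) (x j) < ε / 2 := by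
    intro n
    obtain ⟨z, hz⟩ := hfin (fun i : ℕ => x ((i : ℤ) - n)) (2 * n) (by
      intro i hi
      have := hx ((i : ℤ) - n)
      have hcast : ((i : ℤ) - n) + 1 = ((i + 1 : ℕ) : ℤ) - n := by push_cast; ring
      rwa [hcast] at this)
    refine ⟨(f.toEquiv ^ (n : ℤ)) z, fun j hj => ?_⟩
    have hj1 : -(n : ℤ) ≤ j ∧ j ≤ n := abs_le.1 hj
    set i : ℕ := (j + n).toNat with hi
    have hic : (i : ℤ) = j + n := Int.toNat_of_nonneg (by omega)
    have hiL : i ≤ 2 * n := by omega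
    have hthis := hz i hiL
    rw [← pow_add_apply f j (n : ℤ) z, ← hic]
    have hxj : (i : ℤ) - (n : ℤ) = j := by omega
    rw [← hxj]
    exact hthis
  choose ys hys using key
  obtain ⟨y, φ, hφ, hy⟩ := subseq_limit ys
  refine ⟨y, fun j => ?_⟩
  have hten : Tendsto (fun k => dist ((f.toEquiv ^ j) (ys (φ k))) (x j)) atTop
      (𝓝 (dist ((f.toEquiv ^ j) y) (x j))) :=
    (((continuous_pow f j).tendsto y).comp hy).dist tendsto_const_nhds
  have hle : dist ((f.toEquiv ^ j) y) (x j) ≤ ε / 2 := by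
    refine le_of_tendsto hten ?_
    filter_upwards [eventually_ge_atTop j.natAbs] with k hk
    refine (hys (φ k) j ?_).le
    have h2 : j.natAbs ≤ φ k := le_trans hk (hφ.id_le k)
    rw [Int.abs_eq_natAbs]
    exact_mod_cast h2
  linarith

/-- δ-chains of length L from u to v -/
def ChainConn (δ : ℝ) (u v : X) (L : ℕ) : Prop :=
  ∃ c : ℕ → X, c 0 = u ∧ c L = v ∧ ∀ i : ℕ, i < L → dist (f (c i)) (c (i + 1)) < δ

lemma chain_refl (δ : ℝ) (u : X) : ChainConn f δ u u 0 :=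
  ⟨fun _ => u, rfl, rfl, by omega⟩

lemma chain_comp {δ : ℝ} {u v w : X} {L M : ℕ}
    (h1 : ChainConn f δ u v L) (h2 : ChainConn f δ v w M) : ChainConn f δ u w (L + M) := by
  obtain ⟨c, hc0, hcL, hcs⟩ := h1
  obtain ⟨d, hd0, hdM, hds⟩ := h2
  refine ⟨fun i => if i ≤ L then c i else d (i - L), by simp [hc0], ?_, ?_⟩
  · by_cases hM : M = 0
    · subst hM; simpa [hcL, hdM.symm, hd0]
    · have : ¬ (L + M ≤ L) := by omega
      simp only [this, if_false]
      simpa using hdM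
  · intro i hi
    by_cases h : i + 1 ≤ L
    · have h' : i ≤ L := by omega
      simp only [h, h', if_true]
      exact hcs i (by omega)
    · by_cases h' : i ≤ L
      · have hiL : i = L := by omega
        subst hiL
        simp only [h, h', if_true, if_false]
        have : d (i + 1 - i) = d 1 := by congr 1; omega
        rw [this, hcL, ← hd0]
        exact hds 0 (by omega)
      · simp only [h, h', if_false]
        have e1 : i + 1 - L = (i - L) + 1 := by omega
        rw [e1]
        exact hds (i - L) (by omega)

lemma chain_bridge {δ : ℝ} (hδ : 0 < δ) (a b y : X) (m : ℤ) (L : ℕ) (hL : 2 ≤ L)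
    (h1 : dist (f a) ((f.toEquiv ^ m) y) < δ)
    (h2 : dist ((f.toEquiv ^ (m + L - 1)) y) b < δ) :
    ChainConn f δ a b L := by
  refine ⟨fun i => if i = 0 then a else if i = L then b else (f.toEquiv ^ (m + i - 1)) y,
    by simp, by simp [show L ≠ 0 by omega], ?_⟩
  intro i hi
  have hbeta : ∀ j : ℕ, (fun i => if i = 0 then a else if i = L then b
      else (f.toEquiv ^ (m + i - 1)) y) j
      = if j = 0 then a else if j = L then b else (f.toEquiv ^ (m + (j : ℤ) - 1)) y :=
    fun j => rfl
  by_cases hi0 : i = 0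
  · subst hi0
    rw [hbeta, hbeta, if_pos rfl, if_neg (by omega : (1:ℕ) ≠ 0), if_neg (by omega : 1 ≠ L)]
    have e : m + ((1 : ℕ) : ℤ) - 1 = m := by push_cast; ring
    rwa [e]
  · have hiL : i ≠ L := by omega
    rw [hbeta, hbeta, if_neg hi0, if_neg hiL, if_neg (by omega : i + 1 ≠ 0)]
    by_cases hi1 : i + 1 = L
    · rw [if_pos hi1, step_orbit]
      have e : m + (i : ℤ) - 1 + 1 = m + (L : ℤ) - 1 := by
        have : ((i : ℤ)) + 1 = L := by exact_mod_cast congrArg (Nat.cast : ℕ → ℤ) hi1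
        omega
      rwa [e]
    · rw [if_neg hi1, step_orbit]
      have e : m + (i : ℤ) - 1 + 1 = m + ((i + 1 : ℕ) : ℤ) - 1 := by push_cast; ring
      rw [e, dist_self]
      exact hδ

lemma tsls_join (hT : TwoSidedLimitShadowing f.toEquiv) (a b : X) (s : ℤ) :
    ∃ y : X,
      Tendsto (fun i : ℤ => dist ((f.toEquiv ^ i) y) ((f.toEquiv ^ i) a)) atBot (𝓝 0) ∧
      Tendsto (fun i : ℤ => dist ((f.toEquiv ^ i) y) ((f.toEquiv ^ (i - s)) b)) atTop (𝓝 0) := by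
  set p : ℤ → X := fun i => if i ≤ 0 then (f.toEquiv ^ i) a else (f.toEquiv ^ (i - s)) b with hp
  have hstep : ∀ i : ℤ, i ≠ 0 → dist (f.toEquiv (p i)) (p (i + 1)) = 0 := by
    intro i h0
    rcases lt_or_gt_of_ne h0 with h | h
    · have e1 : p i = (f.toEquiv ^ i) a := by simp only [hp]; rw [if_pos h.le]
      have e2 : p (i + 1) = (f.toEquiv ^ (i + 1)) a := by
        simp only [hp]; rw [if_pos (by omega : i + 1 ≤ 0)]
      rw [e1, e2]
      have e3 : f.toEquiv ((f.toEquiv ^ i) a) = (f.toEquiv ^ (i + 1)) a := step_orbit f i a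
      rw [e3, dist_self]
    · have e1 : p i = (f.toEquiv ^ (i - s)) b := by
        simp only [hp]; rw [if_neg (by omega : ¬ i ≤ 0)]
      have e2 : p (i + 1) = (f.toEquiv ^ (i + 1 - s)) b := by
        simp only [hp]; rw [if_neg (by omega : ¬ i + 1 ≤ 0)]
      rw [e1, e2]
      have e3 : f.toEquiv ((f.toEquiv ^ (i - s)) b) = (f.toEquiv ^ (i - s + 1)) b :=
        step_orbit f (i - s) b
      rw [e3, show i - s + 1 = i + 1 - s by ring, dist_self]
  have hpo : IsTwoSidedLimitPseudoOrbit f.toEquiv p := by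
    have hev : ∀ᶠ i in (cofinite : Filter ℤ),
        dist (f.toEquiv (p i)) (p (i + 1)) = 0 := by
      refine Filter.eventually_cofinite.2 (Set.Finite.subset (Set.finite_singleton 0) ?_)
      intro i hi
      simp only [Set.mem_setOf_eq] at hi
      simp only [Set.mem_singleton_iff]
      by_contra h0
      exact hi (hstep i h0)
    exact Tendsto.congr' (by filter_upwards [hev] with i h using h.symm) tendsto_const_nhds
  obtain ⟨y, hy⟩ := hT p hpo
  rw [Int.cofinite_eq, tendsto_sup] at hy
  refine ⟨y, ?_, ?_⟩
  · refine Tendsto.congr' ?_ hy.1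
    filter_upwards [eventually_le_atBot (0 : ℤ)] with i hi
    simp only [hp]; rw [if_pos hi]
  · refine Tendsto.congr' ?_ hy.2
    filter_upwards [eventually_ge_atTop (1 : ℤ)] with i hi
    simp only [hp]; rw [if_neg (by omega : ¬ i ≤ 0)]

lemma connect₂ (hT : TwoSidedLimitShadowing f.toEquiv) {δ : ℝ} (hδ : 0 < δ) (u v : X) :
    ∃ T : ℕ, 1 ≤ T ∧ ChainConn f δ u v T ∧ ChainConn f δ u v (T + 1) := by
  obtain ⟨δ₁, hδ₁, hδ₁δ, hmod⟩ := modulus_f f hδ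
  obtain ⟨w, φ, hφ, hw⟩ := subseq_limit (fun k : ℕ => (f.toEquiv ^ (k : ℤ)) u)
  obtain ⟨v', ψ, hψ, hv'⟩ := subseq_limit (fun k : ℕ => (f.toEquiv ^ (-(k : ℤ))) v)
  obtain ⟨y₀, hy₀b, hy₀t⟩ := tsls_join f hT w v' 0
  obtain ⟨y₁, hy₁b, hy₁t⟩ := tsls_join f hT w v' 1
  -- pick K
  obtain ⟨B₀, hB₀⟩ := eventually_atBot.1 (hy₀b.eventually (gt_mem_nhds hδ₁))
  obtain ⟨B₁, hB₁⟩ := eventually_atBot.1 (hy₁b.eventually (gt_mem_nhds hδ₁))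
  obtain ⟨C₀, hC₀⟩ := eventually_atTop.1 (hy₀t.eventually (gt_mem_nhds hδ₁))
  obtain ⟨C₁, hC₁⟩ := eventually_atTop.1 (hy₁t.eventually (gt_mem_nhds hδ₁))
  set KZ : ℤ := max 1 (max (max (-B₀) (-B₁)) (max C₀ C₁)) with hKZ
  have hKZ1 : 1 ≤ KZ := le_max_left _ _
  set K : ℕ := KZ.toNat with hK
  have hKcast : (K : ℤ) = KZ := Int.toNat_of_nonneg (by omega)
  have hK1 : 1 ≤ K := by omega
  -- choose j : approach of u-orbit to w at depth -K
  have htu : Tendsto (fun jj : ℕ => (f.toEquiv ^ ((φ jj : ℤ) - K)) u) atTop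
      (𝓝 ((f.toEquiv ^ (-(K : ℤ))) w)) := by
    have h1 := ((continuous_pow f (-(K : ℤ))).tendsto w).comp hw
    refine Tendsto.congr (fun jj => ?_) h1
    show (f.toEquiv ^ (-(K:ℤ))) ((f.toEquiv ^ ((φ jj : ℕ) : ℤ)) u) = _
    rw [← pow_add_apply]
    congr 1
    ring
  obtain ⟨J, hJ⟩ := eventually_atTop.1 (htu.eventually (Metric.ball_mem_nhds _ hδ))
  set n : ℕ := φ (max J (K + 2)) with hn
  have hnK : K + 2 ≤ n := le_trans (le_max_right _ _) (hφ.id_le _)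
  have hnw : dist ((f.toEquiv ^ ((n : ℤ) - K)) u) ((f.toEquiv ^ (-(K : ℤ))) w) < δ := by
    have h := hJ (max J (K + 2)) (le_max_left _ _)
    rwa [← hn] at h
  -- choose l : approach of backward orbit of v to v'
  have htv : ∀ c : ℤ, Tendsto (fun ll : ℕ => (f.toEquiv ^ (c - (ψ ll : ℤ))) v) atTop
      (𝓝 ((f.toEquiv ^ c) v')) := by
    intro c
    have h1 := ((continuous_pow f c).tendsto v').comp hv'
    refine Tendsto.congr (fun ll => ?_) h1
    show (f.toEquiv ^ c) ((f.toEquiv ^ (-((ψ ll : ℕ) : ℤ))) v) = _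
    rw [← pow_add_apply]
    norm_num [sub_eq_add_neg]
  obtain ⟨L₀, hL₀⟩ := eventually_atTop.1 (((htv ((K : ℤ) + 1)).eventually
    (Metric.ball_mem_nhds _ hδ₁)))
  obtain ⟨L₁, hL₁⟩ := eventually_atTop.1 (((htv ((K : ℤ))).eventually
    (Metric.ball_mem_nhds _ hδ₁)))
  set l : ℕ := max (max L₀ L₁) (K + 3) with hl
  set m : ℕ := ψ l with hm
  have hmK : K + 3 ≤ m := le_trans (le_max_right _ _) (hψ.id_le _)
  have hmv0 : dist ((f.toEquiv ^ ((K : ℤ) + 1 - m)) v) ((f.toEquiv ^ ((K : ℤ) + 1)) v') < δ₁ := by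
    exact hL₀ l (le_trans (le_max_left _ _) (le_max_left _ _))
  have hmv1 : dist ((f.toEquiv ^ ((K : ℤ) - m)) v) ((f.toEquiv ^ ((K : ℤ))) v') < δ₁ := by
    exact hL₁ l (le_trans (le_max_right _ _) (le_max_left _ _))
  -- the key chain construction, for shift s
  have key : ∀ (s : ℕ) (ys : X),
      (∀ i : ℤ, i ≤ -(K : ℤ) → dist ((f.toEquiv ^ i) ys) ((f.toEquiv ^ i) w) < δ₁) →
      (∀ i : ℤ, (K : ℤ) ≤ i → dist ((f.toEquiv ^ i) ys) ((f.toEquiv ^ (i - s)) v') < δ₁) →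
      (dist ((f.toEquiv ^ ((K : ℤ) + 1 - s - m)) v) ((f.toEquiv ^ ((K : ℤ) + 1 - s)) v') < δ₁) →
      s ≤ 1 →
      ChainConn f δ u v ((n - K) + (2 * K + 1) + (m - K - 1 + s)) := by
    intro s ys hysb hyst hlv hs1
    have c1 : ChainConn f δ u ((f.toEquiv ^ (-(K : ℤ))) w) (n - K) := by
      refine chain_bridge f hδ _ _ u 1 (n - K) (by omega) ?_ ?_
      · have e : (f.toEquiv ^ (1 : ℤ)) u = f u := by rw [zpow_one]; rfl
        rw [e, dist_self]; exact hδ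
      · have e : (1 : ℤ) + ((n - K : ℕ) : ℤ) - 1 = (n : ℤ) - K := by
          push_cast [Nat.cast_sub (by omega : K ≤ n)]; ring
        rw [e]; exact hnw
    have c2 : ChainConn f δ ((f.toEquiv ^ (-(K : ℤ))) w)
        ((f.toEquiv ^ ((K : ℤ) + 1 - s)) v') (2 * K + 1) := by
      refine chain_bridge f hδ _ _ ys (-(K : ℤ) + 1) (2 * K + 1) (by omega) ?_ ?_
      · have e : (f.toEquiv ^ (-(K : ℤ) + 1)) ys = f ((f.toEquiv ^ (-(K : ℤ))) ys) :=
          (step_orbit f (-(K : ℤ)) ys).symm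
        rw [e]
        refine hmod _ _ ?_
        rw [dist_comm]
        exact hysb (-(K : ℤ)) le_rfl
      · have e : -(K : ℤ) + 1 + ((2 * K + 1 : ℕ) : ℤ) - 1 = (K : ℤ) + 1 := by push_cast; ring
        rw [e]
        have := hyst ((K : ℤ) + 1) (by omega)
        have e2 : (K : ℤ) + 1 - s = (K : ℤ) + 1 - s := rfl
        exact lt_of_lt_of_le this hδ₁δ
    have c3 : ChainConn f δ ((f.toEquiv ^ ((K : ℤ) + 1 - s)) v') v (m - K - 1 + s) := by
      refine chain_bridge f hδ _ _ v ((K : ℤ) + 2 - s - m) (m - K - 1 + s) (by omega) ?_ ?_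
      · have e : (f.toEquiv ^ ((K : ℤ) + 2 - s - m)) v
            = f ((f.toEquiv ^ ((K : ℤ) + 1 - s - m)) v) := by
          rw [step_orbit]
          congr 1
          ring
        rw [e]
        refine hmod _ _ ?_
        rw [dist_comm]
        exact hlv
      · have e : (K : ℤ) + 2 - s - m + ((m - K - 1 + s : ℕ) : ℤ) - 1 = 0 := by
          have e1 : ((m - K - 1 + s : ℕ) : ℤ) = (m : ℤ) - K - 1 + s := by
            push_cast [Nat.cast_sub (by omega : K + 1 ≤ m), Nat.cast_sub (by omega : K ≤ m)]
            omega
          rw [e1]; ring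
        rw [e]
        have e2 : (f.toEquiv ^ (0 : ℤ)) v = v := by rw [zpow_zero]; rfl
        rw [e2, dist_self]
        exact hδ
    exact chain_comp f (chain_comp f c1 c2) c3
  -- apply for s = 0 and s = 1
  have h0 : ChainConn f δ u v ((n - K) + (2 * K + 1) + (m - K - 1 + 0)) := by
    refine key 0 y₀ (fun i hi => hB₀ i (by omega)) (fun i hi => ?_) ?_ (by omega)
    · have := hC₀ i (by omega)
      simpa using this
    · simpa using hmv0
  have h1 : ChainConn f δ u v ((n - K) + (2 * K + 1) + (m - K - 1 + 1)) := by
    refine key 1 y₁ (fun i hi => hB₁ i (by omega)) (fun i hi => ?_) ?_ (by omega)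
    · have := hC₁ i (by omega)
      simpa using this
    · simpa using hmv1
  refine ⟨n + m, by omega, ?_, ?_⟩
  · have e : (n - K) + (2 * K + 1) + (m - K - 1 + 0) = n + m := by omega
    rwa [e] at h0
  · have e : (n - K) + (2 * K + 1) + (m - K - 1 + 1) = n + m + 1 := by omega
    rwa [e] at h1

lemma chain_pow {δ : ℝ} {v : X} {a : ℕ} (h : ChainConn f δ v v a) :
    ∀ p : ℕ, ChainConn f δ v v (p * a)
  | 0 => by simpa using chain_refl f δ v
  | (p + 1) => by
      have := chain_comp f (chain_pow h p) h
      rwa [show p * a + a = (p + 1) * a by ring] at this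

lemma chain_all_large (hT : TwoSidedLimitShadowing f.toEquiv) {δ : ℝ} (hδ : 0 < δ)
    (u v : X) : ∃ N : ℕ, ∀ L : ℕ, N ≤ L → ChainConn f δ u v L := by
  obtain ⟨T, hT1, hTc, -⟩ := connect₂ f hT hδ u v
  obtain ⟨a, ha1, hA, hB⟩ := connect₂ f hT hδ v v
  refine ⟨T + a * a, fun L hL => ?_⟩
  set M : ℕ := L - T with hM
  have hMa : a * a ≤ M := by omega
  set r : ℕ := M % a with hr
  set q : ℕ := M / a with hq
  have hdm : q * a + r = M := by
    have h := Nat.div_add_mod M a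
    rw [Nat.mul_comm] at h
    exact h
  have hra : r < a := Nat.mod_lt _ (by omega)
  have haq : a ≤ q := (Nat.le_div_iff_mul_le (by omega)).2 hMa
  have hloop : ChainConn f δ v v M := by
    have h1 := chain_pow f hA (q - r)
    have h2 := chain_pow f hB r
    have h3 := chain_comp f h1 h2
    have e : (q - r) * a + r * (a + 1) = M := by
      have e1 : (q - r) * a = q * a - r * a := Nat.sub_mul q r a
      have e2 : r * a ≤ q * a := Nat.mul_le_mul_right a (by omega)
      have e3 : r * (a + 1) = r * a + r := by ring
      omega
    rwa [e] at h3
  have := chain_comp f hTc hloop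
  rwa [show T + M = L by omega] at this

lemma mixing_of_tsls (hT : TwoSidedLimitShadowing f.toEquiv)
    (hsh : ShadowingPropertyZ f.toEquiv) : TopologicallyMixing ⇑f := by
  rintro U V hU hV ⟨u, hu⟩ ⟨v, hv⟩
  obtain ⟨ε₁, hε₁, hbu⟩ := Metric.isOpen_iff.1 hU u hu
  obtain ⟨ε₂, hε₂, hbv⟩ := Metric.isOpen_iff.1 hV v hv
  set ε : ℝ := min ε₁ ε₂ with hε
  have hεpos : 0 < ε := lt_min hε₁ hε₂
  obtain ⟨δ, hδ, hshad⟩ := hsh ε hεpos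
  obtain ⟨N, hN⟩ := chain_all_large f hT hδ u v
  refine ⟨N, fun n hn => ?_⟩
  obtain ⟨c, hc0, hcn, hcs⟩ := hN n hn
  set x : ℤ → X := fun i =>
    if i < 0 then (f.toEquiv ^ i) u else if i ≤ (n : ℤ) then c i.toNat
    else (f.toEquiv ^ (i - n)) v with hx
  have hps : ∀ i : ℤ, dist (f.toEquiv (x i)) (x (i + 1)) < δ := by
    intro i
    rcases lt_trichotomy i (-1) with h | h | h
    · have e1 : x i = (f.toEquiv ^ i) u := by simp only [hx]; rw [if_pos (by omega)]
      have e2 : x (i + 1) = (f.toEquiv ^ (i + 1)) u := by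
        simp only [hx]; rw [if_pos (by omega)]
      rw [e1, e2, show f.toEquiv ((f.toEquiv ^ i) u) = (f.toEquiv ^ (i+1)) u from
        step_orbit f i u, dist_self]
      exact hδ
    · subst h
      have e1 : x (-1) = (f.toEquiv ^ (-1 : ℤ)) u := by simp only [hx]; rw [if_pos (by omega)]
      have e2 : x (-1 + 1) = u := by
        simp only [hx]
        rw [if_neg (by omega), if_pos (by omega)]
        simpa using hc0
      rw [e1, e2, show f.toEquiv ((f.toEquiv ^ (-1 : ℤ)) u) = (f.toEquiv ^ (0 : ℤ)) u from
        step_orbit f (-1) u, zpow_zero, Equiv.Perm.coe_one, id_eq, dist_self]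
      exact hδ
    · have hi0 : 0 ≤ i := by omega
      rcases lt_trichotomy i (n : ℤ) with h2 | h2 | h2
      · have e1 : x i = c i.toNat := by
          simp only [hx]; rw [if_neg (by omega), if_pos (by omega)]
        have e2 : x (i + 1) = c (i.toNat + 1) := by
          simp only [hx]; rw [if_neg (by omega), if_pos (by omega)]
          congr 1
          omega
        rw [e1, e2]
        exact hcs i.toNat (by omega)
      · subst h2
        have e1 : x (n : ℤ) = v := by
          simp only [hx]; rw [if_neg (by omega), if_pos (by omega)]
          simpa using hcn
        have e2 : x ((n : ℤ) + 1) = (f.toEquiv ^ (1 : ℤ)) v := by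
          simp only [hx]; rw [if_neg (by omega), if_neg (by omega)]
          congr 1
          ring
        rw [e1, e2, show (f.toEquiv ^ (1:ℤ)) v = f.toEquiv v by rw [zpow_one], dist_self]
        exact hδ
      · have e1 : x i = (f.toEquiv ^ (i - n)) v := by
          simp only [hx]; rw [if_neg (by omega), if_neg (by omega)]
        have e2 : x (i + 1) = (f.toEquiv ^ (i + 1 - n)) v := by
          simp only [hx]; rw [if_neg (by omega), if_neg (by omega)]
        rw [e1, e2, show f.toEquiv ((f.toEquiv ^ (i - n)) v) = (f.toEquiv ^ (i - n + 1)) v from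
          step_orbit f (i - (n:ℤ)) v, show i - (n:ℤ) + 1 = i + 1 - n by ring, dist_self]
        exact hδ
  obtain ⟨y, hy⟩ := hshad x hps
  have hyU : y ∈ U := by
    have := hy 0
    have e0 : x 0 = u := by
      simp only [hx]; rw [if_neg (by omega), if_pos (by omega)]
      simpa using hc0
    rw [e0, zpow_zero, Equiv.Perm.coe_one, id_eq] at this
    exact hbu (lt_of_lt_of_le this (min_le_left _ _))
  have hyV : (⇑f)^[n] y ∈ V := by
    have := hy (n : ℤ)
    have en : x (n : ℤ) = v := by
      simp only [hx]; rw [if_neg (by omega), if_pos (by omega)]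
      simpa using hcn
    rw [en] at this
    rw [iterate_eq_pow]
    exact hbv (lt_of_lt_of_le this (min_le_right _ _))
  exact ⟨(⇑f)^[n] y, ⟨y, hyU, rfl⟩, hyV⟩

lemma finite_sh_of_tsls (hT : TwoSidedLimitShadowing f.toEquiv) : FiniteSh f := by
  by_contra hcon
  rw [FiniteSh] at hcon
  push_neg at hcon
  obtain ⟨ε, hε, hbad⟩ := hcon
  -- bad blocks
  choose w Lk hwstep hwbad using fun k : ℕ => hbad (1 / (k + 1)) (by positivity)
  -- connectors
  have hconn := fun k : ℕ => chain_all_large f hT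
    (by positivity : (0:ℝ) < 1 / (k + 1)) (w k (Lk k)) (w (k + 1) 0)
  choose Nc hNc using hconn
  set G : ℕ → ℕ := fun k => max (Nc k) 1 with hG
  have hG1 : ∀ k, 1 ≤ G k := fun k => le_max_right _ _
  choose γ hγ0 hγG hγs using fun k : ℕ => hNc k (G k) (le_max_left _ _)
  -- blocks
  set n : ℕ → ℕ := fun k => Lk k + G k with hn
  have hnn : ∀ k, n k = Lk k + G k := fun _ => rfl
  have hn1 : ∀ k, 1 ≤ n k := fun k => by have := hG1 k; have := hnn k; omega
  set E : ℕ → ℕ → X := fun k i => if i < Lk k then w k i else γ k (i - Lk k) with hE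
  have hEw : ∀ k, ∀ i ≤ Lk k, E k i = w k i := by
    intro k i hi
    rcases lt_or_eq_of_le hi with h | h
    · simp only [hE]; rw [if_pos h]
    · subst h
      simp only [hE]; rw [if_neg (by omega)]
      simpa using hγ0 k
  have hEstep : ∀ k, ∀ i < n k, dist (f (E k i)) (E k (i + 1)) < 1 / (k + 1) := by
    intro k i hi
    by_cases h : i < Lk k
    · rw [hEw k i h.le, hEw k (i + 1) (by omega)]
      exact hwstep k i h
    · have e1 : E k i = γ k (i - Lk k) := by simp only [hE]; rw [if_neg h]
      have e2 : E k (i + 1) = γ k (i - Lk k + 1) := by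
        simp only [hE]; rw [if_neg (by omega)]
        congr 1
        omega
      rw [e1, e2]
      exact hγs k (i - Lk k) (by have := hnn k; omega)
  have hEend : ∀ k, E k (n k) = E (k + 1) 0 := by
    intro k
    have hnk := hnn k
    have hGk := hG1 k
    have e1 : E k (n k) = γ k (G k) := by
      simp only [hE]; rw [if_neg (by omega)]
      congr 1
      omega
    rw [e1, hγG k, ← hEw (k + 1) 0 (Nat.zero_le _)]
  -- the index bookkeeping
  set sB : ℕ → ℕ := fun k => (Finset.range k).sum n with hsB
  have hsBsucc : ∀ k, sB (k + 1) = sB k + n k := fun k => Finset.sum_range_succ n k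
  have hsBmono : Monotone sB := by
    intro a b hab
    exact Finset.sum_le_sum_of_subset (Finset.range_subset_range.2 hab)
  have hsBk : ∀ k, k ≤ sB k := by
    intro k
    induction k with
    | zero => omega
    | succ k ih => have := hn1 k; rw [hsBsucc]; omega
  have hex : ∀ j : ℕ, ∃ k, j < sB (k + 1) := fun j => ⟨j, by have := hsBk (j+1); omega⟩
  set K : ℕ → ℕ := fun j => Nat.find (hex j) with hKdef
  have hK1 : ∀ j, j < sB (K j + 1) := fun j => Nat.find_spec (hex j)
  have hK2 : ∀ j, sB (K j) ≤ j := by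
    intro j
    rcases Nat.eq_zero_or_pos (K j) with h | h
    · rw [h]; simp [hsB]
    · have := Nat.find_min (hex j) (show K j - 1 < K j by omega)
      have e : K j - 1 + 1 = K j := by omega
      rw [e] at this
      omega
  have hKuniq : ∀ k i, i < n k → K (sB k + i) = k := by
    intro k i hi
    have h1 : K (sB k + i) ≤ k := Nat.find_le (by rw [hsBsucc]; omega)
    have h2 : ¬ (K (sB k + i) < k) := by
      intro hlt
      have := hsBmono (show K (sB k + i) + 1 ≤ k by omega)
      have := hK1 (sB k + i)
      omega
    omega
  set b : ℕ → X := fun j => E (K j) (j - sB (K j)) with hb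
  have hbin : ∀ k, ∀ i < n k, b (sB k + i) = E k i := by
    intro k i hi
    simp only [hb]
    rw [hKuniq k i hi]
    congr 1
    omega
  have hbstep : ∀ j : ℕ, dist (f (b j)) (b (j + 1)) < 1 / (K j + 1) := by
    intro j
    have h2 := hK2 j
    have h1 := hK1 j
    have hs := hsBsucc (K j)
    have hilt : j - sB (K j) < n (K j) := by omega
    have e1 : b j = E (K j) (j - sB (K j)) := by
      conv_lhs => rw [show j = sB (K j) + (j - sB (K j)) by omega]
      exact hbin (K j) _ hilt
    by_cases h : j - sB (K j) + 1 < n (K j)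
    · have e2 : b (j + 1) = E (K j) (j - sB (K j) + 1) := by
        rw [show j + 1 = sB (K j) + (j - sB (K j) + 1) by omega]
        exact hbin (K j) _ h
      rw [e1, e2]
      exact hEstep (K j) _ hilt
    · have e2 : b (j + 1) = E (K j + 1) 0 := by
        rw [show j + 1 = sB (K j + 1) + 0 by omega]
        exact hbin (K j + 1) 0 (hn1 (K j + 1))
      rw [e1, e2, ← hEend (K j), show n (K j) = j - sB (K j) + 1 by omega]
      exact hEstep (K j) _ hilt
  have hKgrow : ∀ k₀ j, sB k₀ ≤ j → k₀ ≤ K j := by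
    intro k₀ j hj
    by_contra h
    push_neg at h
    have := hsBmono (show K j + 1 ≤ k₀ by omega)
    have := hK1 j
    omega
  -- the glued two-sided sequence
  set x : ℤ → X := fun i => if i < 0 then (f.toEquiv ^ i) (b 0) else b i.toNat with hx
  have hpo : IsTwoSidedLimitPseudoOrbit f.toEquiv x := by
    refine Metric.tendsto_nhds.2 (fun η hη => ?_)
    rw [eventually_cofinite]
    obtain ⟨k₀, hk₀⟩ : ∃ k₀ : ℕ, 1 / ((k₀ : ℝ) + 1) < η := by
      obtain ⟨k₀, hk₀⟩ := exists_nat_one_div_lt hη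
      exact ⟨k₀, hk₀⟩
    have hsub : {i : ℤ | ¬ dist (dist (f.toEquiv (x i)) (x (i + 1))) 0 < η}
        ⊆ Set.Icc 0 ((sB k₀ : ℤ)) := by
      intro i hi
      simp only [Set.mem_setOf_eq] at hi
      simp only [Set.mem_Icc]
      constructor
      · by_contra h
        push_neg at h
        apply hi
        have e1 : x i = (f.toEquiv ^ i) (b 0) := by
          simp only [hx]; rw [if_pos (by omega)]
        have e2 : x (i + 1) = (f.toEquiv ^ (i + 1)) (b 0) := by
          by_cases h1 : i + 1 < 0
          · simp only [hx]; rw [if_pos h1]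
          · have h2 : i + 1 = 0 := by omega
            rw [h2]
            simp only [hx]
            rw [if_neg (by omega), zpow_zero]
            rfl
        rw [e1, e2, show f.toEquiv ((f.toEquiv ^ i) (b 0)) = (f.toEquiv ^ (i + 1)) (b 0) from
          step_orbit f i (b 0), dist_self]
        rwa [dist_self]
      · by_contra h
        push_neg at h
        apply hi
        have h0 : (0 : ℤ) ≤ i := by have := hsBk k₀; omega
        have e1 : x i = b i.toNat := by simp only [hx]; rw [if_neg (by omega)]
        have e2 : x (i + 1) = b (i.toNat + 1) := by
          simp only [hx]; rw [if_neg (by omega)]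
          congr 1
          omega
        rw [e1, e2, Real.dist_eq, sub_zero, abs_of_nonneg dist_nonneg]
        have hKi : k₀ ≤ K i.toNat := hKgrow k₀ i.toNat (by omega)
        refine lt_trans (lt_of_lt_of_le (hbstep i.toNat) ?_) hk₀
        apply one_div_le_one_div_of_le (by positivity)
        have hcast : k₀ + 1 ≤ K i.toNat + 1 := by omega
        exact_mod_cast hcast
    exact Set.Finite.subset (Set.finite_Icc _ _) hsub
  obtain ⟨y, hy⟩ := hT x hpo
  have hev : ∀ᶠ i in (cofinite : Filter ℤ), dist ((f.toEquiv ^ i) y) (x i) < ε :=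
    hy.eventually (gt_mem_nhds hε)
  rw [eventually_cofinite] at hev
  obtain ⟨MB, hMB⟩ : ∃ M : ℕ, ∀ i : ℤ, (M : ℤ) ≤ i →
      dist ((f.toEquiv ^ i) y) (x i) < ε := by
    obtain ⟨B, hB⟩ := hev.bddAbove
    refine ⟨(max B 0).toNat + 1, fun i hi => ?_⟩
    by_contra h
    have hmem : i ∈ {i : ℤ | ¬dist ((f.toEquiv ^ i) y) (x i) < ε} := h
    have := hB hmem
    have h2 : (0:ℤ) ≤ max B 0 := le_max_right _ _
    have h3 : ((max B 0).toNat : ℤ) = max B 0 := Int.toNat_of_nonneg h2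
    have h4 : B ≤ max B 0 := le_max_left _ _
    omega
  -- extract the contradiction at block MB
  have hkdef : ∃ k : ℕ, k = MB := ⟨MB, rfl⟩
  obtain ⟨k, hkMB⟩ := hkdef
  obtain ⟨i, hiL, hige⟩ := hwbad k ((f.toEquiv ^ ((sB k : ℕ) : ℤ)) y)
  have hxval : x ((sB k : ℤ) + i) = w k i := by
    have h0 : (0:ℤ) ≤ (sB k : ℤ) + i := by omega
    have e1 : x ((sB k : ℤ) + i) = b (((sB k : ℤ) + i).toNat) := by
      simp only [hx]; rw [if_neg (by omega)]
    have e2 : (((sB k : ℤ) + i).toNat) = sB k + i := by omega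
    rw [e1, e2, hbin k i (by have := hG1 k; have := hnn k; omega), hEw k i hiL]
  have hcontr := hMB ((sB k : ℤ) + i) (by have := hsBk k; omega)

  rw [hxval] at hcontr
  rw [← pow_add_apply f (i : ℤ) ((sB k : ℕ) : ℤ) y] at hige
  rw [show ((i:ℤ) + sB k) = ((sB k : ℤ) + i) by ring] at hige
  exact absurd hcontr (not_lt.2 hige)

lemma shadowing_of_tsls (hT : TwoSidedLimitShadowing f.toEquiv) :
    ShadowingPropertyZ f.toEquiv :=
  shadowing_of_finite f (finite_sh_of_tsls f hT)

lemma ball_net {r : ℝ} (hr : 0 < r) : ∃ T : Finset X, ∀ q : X, ∃ t ∈ T, dist q t < r := by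
  obtain ⟨t, -, ht, hcov⟩ := finite_cover_balls_of_compact (isCompact_univ (X := X)) hr
  obtain ⟨T, rfl⟩ := ht.exists_finset_coe
  refine ⟨T, fun q => ?_⟩
  have := hcov (Set.mem_univ q)
  simp only [Set.mem_iUnion, Metric.mem_ball] at this
  obtain ⟨i, hi, h⟩ := this
  exact ⟨i, hi, h⟩

lemma asymp_top (c : ℝ) (hc : 0 < c)
    (hexp : ∀ x y : X, (∀ n : ℤ, dist ((f.toEquiv ^ n) x) ((f.toEquiv ^ n) y) ≤ c) → x = y)
    (hsh : ShadowingPropertyZ f.toEquiv)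
    (x : ℤ → X) (herr : Tendsto (fun i : ℤ => dist (f.toEquiv (x i)) (x (i + 1))) atTop (𝓝 0))
    (y : X) (M₁ : ℤ) (hy : ∀ i : ℤ, M₁ ≤ i → dist ((f.toEquiv ^ i) y) (x i) ≤ c / 3) :
    Tendsto (fun i : ℤ => dist ((f.toEquiv ^ i) y) (x i)) atTop (𝓝 0) := by
  rw [Metric.tendsto_nhds]
  intro ε' hε'
  set ε₁ : ℝ := min (ε' / 2) (c / 3) with hε₁def
  have hε₁ : 0 < ε₁ := lt_min (by positivity) (by positivity)
  obtain ⟨N, hN⟩ := unif_exp f c hexp (show (0:ℝ) < ε' / 2 by positivity)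
  obtain ⟨δ₂, hδ₂, hshad⟩ := hsh ε₁ hε₁
  obtain ⟨M₃, hM₃⟩ := eventually_atTop.1 (herr.eventually (gt_mem_nhds hδ₂))
  rw [eventually_atTop]
  refine ⟨max (M₃ + N) (M₁ + N), fun i hi => ?_⟩
  have hiM₃ : M₃ + N ≤ i := le_trans (le_max_left _ _) hi
  have hiM₁ : M₁ + N ≤ i := le_trans (le_max_right _ _) hi
  set q : ℤ → X := fun j => if -(N:ℤ) ≤ j then x (i + j)
    else (f.toEquiv ^ (j + N)) (x (i - N)) with hq
  have hqs : ∀ j : ℤ, dist (f.toEquiv (q j)) (q (j + 1)) < δ₂ := by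
    intro j
    by_cases h1 : -(N:ℤ) ≤ j
    · have e1 : q j = x (i + j) := by simp only [hq]; rw [if_pos h1]
      have e2 : q (j + 1) = x (i + j + 1) := by
        simp only [hq]; rw [if_pos (by omega)]
        congr 1
        ring
      rw [e1, e2]
      exact hM₃ (i + j) (by omega)
    · by_cases h2 : j + 1 = -(N:ℤ)
      · have e1 : q j = (f.toEquiv ^ (-1 : ℤ)) (x (i - N)) := by
          have e0 : j + (N:ℤ) = -1 := by omega
          simp only [hq]; rw [if_neg h1, e0]
        have e2 : q (j + 1) = x (i - N) := by
          simp only [hq]; rw [if_pos (by omega)]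
          congr 1
          omega
        rw [e1, e2, show f.toEquiv ((f.toEquiv ^ (-1:ℤ)) (x (i - N)))
          = (f.toEquiv ^ (0:ℤ)) (x (i - N)) from step_orbit f (-1) (x (i - N)),
          zpow_zero, Equiv.Perm.coe_one, id_eq, dist_self]
        exact hδ₂
      · have e1 : q j = (f.toEquiv ^ (j + N)) (x (i - N)) := by
          simp only [hq]; rw [if_neg h1]
        have e2 : q (j + 1) = (f.toEquiv ^ (j + 1 + N)) (x (i - N)) := by
          simp only [hq]; rw [if_neg (by omega)]
        rw [e1, e2, show f.toEquiv ((f.toEquiv ^ (j + N)) (x (i - N)))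
          = (f.toEquiv ^ (j + N + 1)) (x (i - N)) from step_orbit f (j + N) (x (i - N)),
          show j + (N:ℤ) + 1 = j + 1 + N by ring, dist_self]
        exact hδ₂
  obtain ⟨w, hw⟩ := hshad q hqs
  have hwin : ∀ m : ℤ, |m| ≤ (N:ℤ) →
      dist ((f.toEquiv ^ m) ((f.toEquiv ^ i) y)) ((f.toEquiv ^ m) w) ≤ c := by
    intro m hm
    have hm' := abs_le.1 hm
    have e1 : (f.toEquiv ^ m) ((f.toEquiv ^ i) y) = (f.toEquiv ^ (m + i)) y :=
      (pow_add_apply f m i y).symm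
    have h1 : dist ((f.toEquiv ^ (m + i)) y) (x (i + m)) ≤ c / 3 := by
      rw [show i + m = m + i by ring]
      exact hy (m + i) (by omega)
    have h2 : dist ((f.toEquiv ^ m) w) (x (i + m)) < ε₁ := by
      have := hw m
      have e2 : q m = x (i + m) := by simp only [hq]; rw [if_pos (by omega)]
      rwa [e2] at this
    calc dist ((f.toEquiv ^ m) ((f.toEquiv ^ i) y)) ((f.toEquiv ^ m) w)
        ≤ dist ((f.toEquiv ^ m) ((f.toEquiv ^ i) y)) (x (i + m))
          + dist (x (i + m)) ((f.toEquiv ^ m) w) := dist_triangle _ _ _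
      _ ≤ c / 3 + ε₁ := by
          rw [e1, dist_comm (x (i + m))]
          exact add_le_add h1 h2.le
      _ ≤ c / 3 + c / 3 := by
          have : ε₁ ≤ c / 3 := min_le_right _ _
          linarith
      _ ≤ c := by linarith
  have hclose : dist ((f.toEquiv ^ i) y) w ≤ ε' / 2 := hN _ _ hwin
  have hwx : dist w (x i) < ε₁ := by
    have := hw 0
    have e2 : q 0 = x i := by
      simp only [hq]; rw [if_pos (by omega)]
      congr 1
      ring
    rwa [e2, zpow_zero, Equiv.Perm.coe_one, id_eq] at this
  have : dist ((f.toEquiv ^ i) y) (x i) < ε' := by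
    have h3 : ε₁ ≤ ε' / 2 := min_le_left _ _
    calc dist ((f.toEquiv ^ i) y) (x i)
        ≤ dist ((f.toEquiv ^ i) y) w + dist w (x i) := dist_triangle _ _ _
      _ < ε' / 2 + ε₁ := by linarith
      _ ≤ ε' := by linarith
  rwa [Real.dist_eq, sub_zero, abs_of_nonneg dist_nonneg]

lemma asymp_bot (c : ℝ) (hc : 0 < c)
    (hexp : ∀ x y : X, (∀ n : ℤ, dist ((f.toEquiv ^ n) x) ((f.toEquiv ^ n) y) ≤ c) → x = y)
    (hsh : ShadowingPropertyZ f.toEquiv)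
    (x : ℤ → X) (herr : Tendsto (fun i : ℤ => dist (f.toEquiv (x i)) (x (i + 1))) atBot (𝓝 0))
    (y : X) (M₀ : ℤ) (hy : ∀ i : ℤ, i ≤ M₀ → dist ((f.toEquiv ^ i) y) (x i) ≤ c / 3) :
    Tendsto (fun i : ℤ => dist ((f.toEquiv ^ i) y) (x i)) atBot (𝓝 0) := by
  rw [Metric.tendsto_nhds]
  intro ε' hε'
  set ε₁ : ℝ := min (ε' / 2) (c / 3) with hε₁def
  have hε₁ : 0 < ε₁ := lt_min (by positivity) (by positivity)
  obtain ⟨N, hN⟩ := unif_exp f c hexp (show (0:ℝ) < ε' / 2 by positivity)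
  obtain ⟨δ₂, hδ₂, hshad⟩ := hsh ε₁ hε₁
  obtain ⟨M₃, hM₃⟩ := eventually_atBot.1 (herr.eventually (gt_mem_nhds hδ₂))
  rw [eventually_atBot]
  refine ⟨min (M₃ - N - 1) (M₀ - N), fun i hi => ?_⟩
  have hiM₃ : i ≤ M₃ - N - 1 := le_trans hi (min_le_left _ _)
  have hiM₀ : i ≤ M₀ - N := le_trans hi (min_le_right _ _)
  set q : ℤ → X := fun j => if j ≤ (N:ℤ) then x (i + j)
    else (f.toEquiv ^ (j - N)) (x (i + N)) with hq
  have hqs : ∀ j : ℤ, dist (f.toEquiv (q j)) (q (j + 1)) < δ₂ := by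
    intro j
    by_cases h1 : j + 1 ≤ (N:ℤ)
    · have e1 : q j = x (i + j) := by simp only [hq]; rw [if_pos (by omega)]
      have e2 : q (j + 1) = x (i + j + 1) := by
        simp only [hq]; rw [if_pos h1]
        congr 1
        ring
      rw [e1, e2]
      exact hM₃ (i + j) (by omega)
    · by_cases h2 : j = (N:ℤ)
      · have e1 : q j = x (i + N) := by
          simp only [hq]; rw [if_pos (by omega)]
          congr 1
          omega
        have e2 : q (j + 1) = (f.toEquiv ^ (1:ℤ)) (x (i + N)) := by
          have e0 : j + 1 - (N:ℤ) = 1 := by omega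
          simp only [hq]; rw [if_neg (by omega), e0]
        rw [e1, e2, show (f.toEquiv ^ (1:ℤ)) (x (i + N)) = f.toEquiv (x (i + N)) by
          rw [zpow_one], dist_self]
        exact hδ₂
      · have e1 : q j = (f.toEquiv ^ (j - N)) (x (i + N)) := by
          simp only [hq]; rw [if_neg (by omega)]
        have e2 : q (j + 1) = (f.toEquiv ^ (j + 1 - N)) (x (i + N)) := by
          simp only [hq]; rw [if_neg (by omega)]
        rw [e1, e2, show f.toEquiv ((f.toEquiv ^ (j - N)) (x (i + N)))
          = (f.toEquiv ^ (j - N + 1)) (x (i + N)) from step_orbit f (j - N) (x (i + N)),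
          show j - (N:ℤ) + 1 = j + 1 - N by ring, dist_self]
        exact hδ₂
  obtain ⟨w, hw⟩ := hshad q hqs
  have hwin : ∀ m : ℤ, |m| ≤ (N:ℤ) →
      dist ((f.toEquiv ^ m) ((f.toEquiv ^ i) y)) ((f.toEquiv ^ m) w) ≤ c := by
    intro m hm
    have hm' := abs_le.1 hm
    have e1 : (f.toEquiv ^ m) ((f.toEquiv ^ i) y) = (f.toEquiv ^ (m + i)) y :=
      (pow_add_apply f m i y).symm
    have h1 : dist ((f.toEquiv ^ (m + i)) y) (x (i + m)) ≤ c / 3 := by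
      rw [show i + m = m + i by ring]
      exact hy (m + i) (by omega)
    have h2 : dist ((f.toEquiv ^ m) w) (x (i + m)) < ε₁ := by
      have := hw m
      have e2 : q m = x (i + m) := by simp only [hq]; rw [if_pos (by omega)]
      rwa [e2] at this
    calc dist ((f.toEquiv ^ m) ((f.toEquiv ^ i) y)) ((f.toEquiv ^ m) w)
        ≤ dist ((f.toEquiv ^ m) ((f.toEquiv ^ i) y)) (x (i + m))
          + dist (x (i + m)) ((f.toEquiv ^ m) w) := dist_triangle _ _ _
      _ ≤ c / 3 + ε₁ := by
          rw [e1, dist_comm (x (i + m))]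
          exact add_le_add h1 h2.le
      _ ≤ c / 3 + c / 3 := by
          have : ε₁ ≤ c / 3 := min_le_right _ _
          linarith
      _ ≤ c := by linarith
  have hclose : dist ((f.toEquiv ^ i) y) w ≤ ε' / 2 := hN _ _ hwin
  have hwx : dist w (x i) < ε₁ := by
    have := hw 0
    have e2 : q 0 = x i := by
      simp only [hq]; rw [if_pos (by omega)]
      congr 1
      ring
    rwa [e2, zpow_zero, Equiv.Perm.coe_one, id_eq] at this
  have : dist ((f.toEquiv ^ i) y) (x i) < ε' := by
    have h3 : ε₁ ≤ ε' / 2 := min_le_left _ _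
    calc dist ((f.toEquiv ^ i) y) (x i)
        ≤ dist ((f.toEquiv ^ i) y) w + dist w (x i) := dist_triangle _ _ _
      _ < ε' / 2 + ε₁ := by linarith
      _ ≤ ε' := by linarith
  rwa [Real.dist_eq, sub_zero, abs_of_nonneg dist_nonneg]

lemma tsls_of_mixing_shadowing (c : ℝ) (hc : 0 < c)
    (hexp : ∀ x y : X, (∀ n : ℤ, dist ((f.toEquiv ^ n) x) ((f.toEquiv ^ n) y) ≤ c) → x = y)
    (hmix : TopologicallyMixing ⇑f) (hsh : ShadowingPropertyZ f.toEquiv) :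
    TwoSidedLimitShadowing f.toEquiv := by
  intro x hx
  obtain ⟨δ₀, hδ₀, hshad⟩ := hsh (c / 3) (by positivity)
  -- bound on where errors can be large
  have hfin : {i : ℤ | ¬ dist (f.toEquiv (x i)) (x (i + 1)) < δ₀ / 2}.Finite :=
    eventually_cofinite.1 (hx.eventually (gt_mem_nhds (by positivity : (0:ℝ) < δ₀ / 2)))
  obtain ⟨M₀, hM₀1, hM⟩ : ∃ M₀ : ℕ, 1 ≤ M₀ ∧ ∀ i : ℤ, (M₀ : ℤ) ≤ |i| →
      dist (f.toEquiv (x i)) (x (i + 1)) < δ₀ / 2 := by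
    obtain ⟨B, hB⟩ := hfin.bddAbove
    obtain ⟨Lb, hLb⟩ := hfin.bddBelow
    refine ⟨(max B (-Lb)).toNat + 1, by omega, fun i hi => ?_⟩
    by_contra h
    have h1 := hB (h : i ∈ {i : ℤ | ¬ dist (f.toEquiv (x i)) (x (i + 1)) < δ₀ / 2})
    have h2 := hLb (h : i ∈ {i : ℤ | ¬ dist (f.toEquiv (x i)) (x (i + 1)) < δ₀ / 2})
    have hmB : B ≤ max B (-Lb) := le_max_left _ _
    have hmL : -Lb ≤ max B (-Lb) := le_max_right _ _
    rcases abs_cases i with ⟨e, _⟩ | ⟨e, _⟩ <;> omega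
  -- the net and mixing
  obtain ⟨T, hT⟩ := ball_net (X := X) (show (0:ℝ) < δ₀ / 4 by positivity)
  choose NV hNV using fun t : X => hmix (Metric.ball (x (-(M₀:ℤ))) (δ₀ / 4))
    (Metric.ball t (δ₀ / 4)) Metric.isOpen_ball Metric.isOpen_ball
    ⟨_, Metric.mem_ball_self (by positivity)⟩ ⟨t, Metric.mem_ball_self (by positivity)⟩
  set NS : ℕ := T.sup NV with hNS
  set M₁ : ℕ := max M₀ NS with hM₁
  have hM₁M₀ : M₀ ≤ M₁ := le_max_left _ _
  set nn : ℕ := M₀ + M₁ with hnn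
  obtain ⟨t, htT, htx⟩ := hT (x (M₁ : ℤ))
  have hnNV : NV t ≤ nn := by
    have h1 : NV t ≤ NS := Finset.le_sup htT
    have h2 : NS ≤ M₁ := le_max_right _ _
    omega
  obtain ⟨qq, ⟨p, hpU, hq⟩, hqV⟩ := hNV t nn hnNV
  have hpx : dist p (x (-(M₀:ℤ))) < δ₀ / 4 := by
    simpa [Metric.mem_ball] using hpU
  have hqx : dist ((f.toEquiv ^ (nn : ℤ)) p) (x (M₁ : ℤ)) < δ₀ / 2 := by
    have h1 : dist qq t < δ₀ / 4 := by simpa [Metric.mem_ball] using hqV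
    have h2 : dist (x (M₁ : ℤ)) t < δ₀ / 4 := htx
    have h3 : (f.toEquiv ^ (nn : ℤ)) p = qq := by rw [← iterate_eq_pow, hq]
    rw [h3]
    calc dist qq (x (M₁ : ℤ)) ≤ dist qq t + dist t (x (M₁ : ℤ)) := dist_triangle _ _ _
      _ < δ₀ / 4 + δ₀ / 4 := by rw [dist_comm t]; exact add_lt_add h1 h2
      _ = δ₀ / 2 := by ring
  -- the glued pseudo-orbit
  set z : ℤ → X := fun i => if i < -(M₀:ℤ) then x i
    else if i < (M₁:ℤ) then (f.toEquiv ^ (i + M₀)) p else x i with hz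
  have hzs : ∀ i : ℤ, dist (f.toEquiv (z i)) (z (i + 1)) < δ₀ := by
    intro i
    rcases lt_trichotomy i (-(M₀:ℤ) - 1) with h | h | h
    · have e1 : z i = x i := by simp only [hz]; rw [if_pos (by omega)]
      have e2 : z (i + 1) = x (i + 1) := by simp only [hz]; rw [if_pos (by omega)]
      rw [e1, e2]
      refine lt_trans (hM i (by rw [abs_of_nonpos (by omega)]; omega)) (by linarith)
    · subst h
      have e1 : z (-(M₀:ℤ) - 1) = x (-(M₀:ℤ) - 1) := by
        simp only [hz]; rw [if_pos (by omega)]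
      have e2 : z (-(M₀:ℤ) - 1 + 1) = p := by
        have e0 : -(M₀:ℤ) - 1 + 1 + M₀ = 0 := by ring
        simp only [hz]
        rw [if_neg (by omega), if_pos (by omega), e0, zpow_zero]
        rfl
      rw [e1, e2]
      calc dist (f.toEquiv (x (-(M₀:ℤ) - 1))) p
          ≤ dist (f.toEquiv (x (-(M₀:ℤ) - 1))) (x (-(M₀:ℤ) - 1 + 1))
            + dist (x (-(M₀:ℤ) - 1 + 1)) p := dist_triangle _ _ _
        _ < δ₀ / 2 + δ₀ / 4 := by
            refine add_lt_add (hM _ (by rw [abs_of_nonpos (by omega)]; omega)) ?_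
            rw [show -(M₀:ℤ) - 1 + 1 = -(M₀:ℤ) by ring, dist_comm]
            exact hpx
        _ < δ₀ := by linarith
    · rcases lt_trichotomy i ((M₁:ℤ) - 1) with h2 | h2 | h2
      · have e1 : z i = (f.toEquiv ^ (i + M₀)) p := by
          simp only [hz]; rw [if_neg (by omega), if_pos (by omega)]
        have e2 : z (i + 1) = (f.toEquiv ^ (i + 1 + M₀)) p := by
          simp only [hz]; rw [if_neg (by omega), if_pos (by omega)]
        rw [e1, e2, show f.toEquiv ((f.toEquiv ^ (i + M₀)) p)
          = (f.toEquiv ^ (i + M₀ + 1)) p from step_orbit f (i + M₀) p,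
          show i + (M₀:ℤ) + 1 = i + 1 + M₀ by ring, dist_self]
        exact hδ₀
      · subst h2
        have e1 : z ((M₁:ℤ) - 1) = (f.toEquiv ^ ((M₁:ℤ) - 1 + M₀)) p := by
          simp only [hz]; rw [if_neg (by omega), if_pos (by omega)]
        have e2 : z ((M₁:ℤ) - 1 + 1) = x (M₁:ℤ) := by
          simp only [hz]
          rw [if_neg (by omega), if_neg (by omega)]
          congr 1
          ring
        rw [e1, e2, show f.toEquiv ((f.toEquiv ^ ((M₁:ℤ) - 1 + M₀)) p)
          = (f.toEquiv ^ ((M₁:ℤ) - 1 + M₀ + 1)) p from step_orbit f _ p,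
          show (M₁:ℤ) - 1 + M₀ + 1 = (nn:ℤ) by push_cast [hnn]; ring]
        exact lt_trans hqx (by linarith)
      · have e1 : z i = x i := by
          simp only [hz]; rw [if_neg (by omega), if_neg (by omega)]
        have e2 : z (i + 1) = x (i + 1) := by
          simp only [hz]; rw [if_neg (by omega), if_neg (by omega)]
        rw [e1, e2]
        refine lt_trans (hM i (by rw [abs_of_nonneg (by omega)]; omega)) (by linarith)
  obtain ⟨y, hy⟩ := hshad z hzs
  refine ⟨y, ?_⟩
  rw [Int.cofinite_eq, tendsto_sup]
  have hbotle : (atBot : Filter ℤ) ≤ cofinite := by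
    rw [Int.cofinite_eq]; exact le_sup_left
  have htople : (atTop : Filter ℤ) ≤ cofinite := by
    rw [Int.cofinite_eq]; exact le_sup_right
  constructor
  · refine asymp_bot f c hc hexp hsh x (hx.mono_left hbotle) y (-(M₀:ℤ) - 1)
      (fun i hi => ?_)
    have e1 : z i = x i := by simp only [hz]; rw [if_pos (by omega)]
    rw [← e1]
    exact (hy i).le
  · refine asymp_top f c hc hexp hsh x (hx.mono_left htople) y ((M₁:ℤ))
      (fun i hi => ?_)
    have e1 : z i = x i := by simp only [hz]; rw [if_neg (by omega), if_neg (by omega)]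
    rw [← e1]
    exact (hy i).le

end TSLSProof

/-- An expansive homeomorphism of a compact metric space is topologically mixing with
the shadowing property if and only if it has the two-sided limit shadowing property. -/
theorem stmt14 [CompactSpace X] (f : X ≃ₜ X) (he : Expansive f.toEquiv) :
    (TopologicallyMixing ⇑f ∧ ShadowingPropertyZ f.toEquiv) ↔
      TwoSidedLimitShadowing f.toEquiv := by
  obtain ⟨c, hc, hexp⟩ := he
  constructor
  · rintro ⟨hmix, hsh⟩
    exact TSLSProof.tsls_of_mixing_shadowing f c hc hexp hmix hsh
  · intro hT
    exact ⟨TSLSProof.mixing_of_tsls f hT (TSLSProof.shadowing_of_tsls f hT),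
      TSLSProof.shadowing_of_tsls f hT⟩
end

section
/- Let (X,d) be a compact metric space with d ≤ 1, equip X^ℤ with the metric D(x,y) = sup_{j∈ℤ} d(x_j, y_j)/2^{|j|}, and let σ : X^ℤ → X^ℤ be the shift map σ((x_n)_{n∈ℤ}) = (x_{n+1})_{n∈ℤ}. Then σ is a homeomorphism of the compact metric space (X^ℤ, D) and has the two-sided limit shadowing property. -/
open Filter Topology

/-- The shift map on `X^ℤ`, as a bijection. -/
def shiftMap {X : Type*} : (ℤ → X) ≃ (ℤ → X) where
  toFun x n := x (n + 1)
  invFun x n := x (n - 1)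
  left_inv x := funext fun n => by simp
  right_inv x := funext fun n => by simp

/-- The metric `D(x,y) = sup_j d(x_j, y_j) / 2^{|j|}` on `X^ℤ`. -/
noncomputable def prodDist {X : Type*} [MetricSpace X] (x y : ℤ → X) : ℝ :=
  ⨆ j : ℤ, dist (x j) (y j) / (2 : ℝ) ^ |j|

section Aux

variable {X : Type*} [MetricSpace X]

lemma shiftMap_pow_apply (i : ℤ) (y : ℤ → X) (j : ℤ) :
    ((shiftMap ^ i) y) j = y (j + i) := by
  induction i using Int.induction_on generalizing y j with
  | zero => simp
  | succ n ih =>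
      rw [zpow_add_one, Equiv.Perm.mul_apply, ih (shiftMap y) j]
      show y (j + n + 1) = _
      congr 1; ring
  | pred n ih =>
      rw [zpow_sub_one, Equiv.Perm.mul_apply, ih (shiftMap⁻¹ y) j]
      show y (j + -(n : ℤ) - 1) = _
      congr 1; ring

lemma prodDist_bdd (hd : ∀ x y : X, dist x y ≤ 1) (u v : ℤ → X) :
    BddAbove (Set.range fun j : ℤ => dist (u j) (v j) / (2 : ℝ) ^ |j|) := by
  refine ⟨1, ?_⟩
  rintro _ ⟨j, rfl⟩
  have h1 : (1 : ℝ) ≤ (2 : ℝ) ^ |j| := one_le_zpow₀ (by norm_num) (abs_nonneg j)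
  calc dist (u j) (v j) / (2 : ℝ) ^ |j| ≤ dist (u j) (v j) :=
        div_le_self dist_nonneg h1
    _ ≤ 1 := hd _ _

lemma prodDist_nonneg (hd : ∀ x y : X, dist x y ≤ 1) (u v : ℤ → X) :
    0 ≤ prodDist u v := by
  have h0 : (0 : ℝ) ≤ dist (u 0) (v 0) / (2 : ℝ) ^ |(0 : ℤ)| := by positivity
  exact h0.trans (le_ciSup (prodDist_bdd hd u v) 0)

lemma dist_le_prodDist (hd : ∀ x y : X, dist x y ≤ 1) (u v : ℤ → X) (j : ℤ) :
    dist (u j) (v j) ≤ (2 : ℝ) ^ |j| * prodDist u v := by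
  have h := le_ciSup (prodDist_bdd hd u v) j
  have hpos : (0 : ℝ) < (2 : ℝ) ^ |j| := by positivity
  rw [div_le_iff₀ hpos] at h
  unfold prodDist
  linarith [h]

/-- forward telescoping estimate -/
lemma forward_est (hd : ∀ x y : X, dist x y ≤ 1) (x : ℤ → (ℤ → X)) {B : ℝ} (hB : 0 ≤ B) :
    ∀ n : ℕ, ∀ i : ℤ,
      (∀ m : ℤ, i ≤ m → m < i + n → prodDist (shiftMap (x m)) (x (m + 1)) ≤ B) →
      dist (x i (n : ℤ)) (x (i + n) 0) ≤ n * 2 ^ n * B := by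
  intro n
  induction n with
  | zero => intro i _; simp
  | succ n ih =>
      intro i h
      have hstep : dist (x i ((n : ℤ) + 1)) (x (i + 1) (n : ℤ)) ≤ 2 ^ (n + 1) * B := by
        have h0 := dist_le_prodDist hd (shiftMap (x i)) (x (i + 1)) (n : ℤ)
        have hsm : shiftMap (x i) (n : ℤ) = x i ((n : ℤ) + 1) := rfl
        rw [hsm] at h0
        have hε : prodDist (shiftMap (x i)) (x (i + 1)) ≤ B :=
          h i le_rfl (by push_cast; omega)
        have habs : |(n : ℤ)| = (n : ℤ) := abs_of_nonneg (by positivity)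
        rw [habs] at h0
        have hzp : (2 : ℝ) ^ ((n : ℤ)) = (2 : ℝ) ^ n := by
          rw [zpow_natCast]
        rw [hzp] at h0
        have hεnn : 0 ≤ prodDist (shiftMap (x i)) (x (i + 1)) := prodDist_nonneg hd _ _
        calc dist (x i ((n : ℤ) + 1)) (x (i + 1) (n : ℤ))
            ≤ (2 : ℝ) ^ n * prodDist (shiftMap (x i)) (x (i + 1)) := h0
          _ ≤ (2 : ℝ) ^ (n + 1) * B := by
              apply mul_le_mul (pow_le_pow_right₀ (by norm_num) (Nat.le_succ n)) hε hεnn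
                (by positivity)
      have hih := ih (i + 1) (fun m hm hm' => h m (by omega) (by push_cast at hm' ⊢; omega))
      have htri : dist (x i ((n : ℕ) + 1 : ℤ)) (x (i + ((n : ℕ) + 1 : ℤ)) 0)
          ≤ dist (x i ((n : ℤ) + 1)) (x (i + 1) (n : ℤ)) +
            dist (x (i + 1) (n : ℤ)) (x (i + 1 + n) 0) := by
        have he1 : ((n : ℕ) + 1 : ℤ) = (n : ℤ) + 1 := by push_cast; ring
        have he2 : i + ((n : ℕ) + 1 : ℤ) = i + 1 + n := by push_cast; ring
        rw [he1, he2]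
        exact dist_triangle _ _ _
      have h2 : (n : ℝ) * 2 ^ n * B ≤ (n : ℝ) * 2 ^ (n + 1) * B := by
        apply mul_le_mul_of_nonneg_right _ hB
        apply mul_le_mul_of_nonneg_left _ (by positivity)
        apply pow_le_pow_right₀ (by norm_num) (by omega)
      calc dist (x i ((n : ℕ) + 1 : ℤ)) (x (i + ((n : ℕ) + 1 : ℤ)) 0)
          ≤ 2 ^ (n + 1) * B + (n : ℝ) * 2 ^ n * B := by
            push_cast at htri ⊢
            linarith [htri, hih]
        _ ≤ 2 ^ (n + 1) * B + (n : ℝ) * 2 ^ (n + 1) * B := by linarith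
        _ = ((n : ℝ) + 1) * 2 ^ (n + 1) * B := by ring
        _ = ((n + 1 : ℕ) : ℝ) * 2 ^ (n + 1) * B := by push_cast; ring

/-- backward telescoping estimate -/
lemma backward_est (hd : ∀ x y : X, dist x y ≤ 1) (x : ℤ → (ℤ → X)) {B : ℝ} (hB : 0 ≤ B) :
    ∀ n : ℕ, ∀ i : ℤ,
      (∀ m : ℤ, i - n ≤ m → m < i → prodDist (shiftMap (x m)) (x (m + 1)) ≤ B) →
      dist (x i (-(n : ℤ))) (x (i - n) 0) ≤ n * 2 ^ n * B := by
  intro n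
  induction n with
  | zero => intro i _; simp
  | succ n ih =>
      intro i h
      have hstep : dist (x i (-((n : ℤ) + 1))) (x (i - 1) (-(n : ℤ))) ≤ 2 ^ (n + 1) * B := by
        have h0 := dist_le_prodDist hd (shiftMap (x (i - 1))) (x (i - 1 + 1)) (-((n : ℤ) + 1))
        have hsm : shiftMap (x (i - 1)) (-((n : ℤ) + 1)) = x (i - 1) (-(n : ℤ)) := by
          show x (i - 1) (-((n : ℤ) + 1) + 1) = x (i - 1) (-(n : ℤ))
          congr 1; ring
        rw [hsm] at h0
        have hi1 : i - 1 + 1 = i := by ring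
        rw [hi1] at h0
        have hε : prodDist (shiftMap (x (i - 1))) (x (i - 1 + 1)) ≤ B :=
          h (i - 1) (by push_cast; omega) (by omega)
        rw [hi1] at hε
        have habs : |(-((n : ℤ) + 1))| = (n : ℤ) + 1 := by
          rw [abs_neg]; exact abs_of_nonneg (by positivity)
        rw [habs] at h0
        have hzp : (2 : ℝ) ^ ((n : ℤ) + 1) = (2 : ℝ) ^ (n + 1) := by
          rw [show ((n : ℤ) + 1) = ((n + 1 : ℕ) : ℤ) by push_cast; ring, zpow_natCast]
        rw [hzp] at h0
        have hεnn : 0 ≤ prodDist (shiftMap (x (i - 1))) (x i) := prodDist_nonneg hd _ _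
        calc dist (x i (-((n : ℤ) + 1))) (x (i - 1) (-(n : ℤ)))
            = dist (x (i - 1) (-(n : ℤ))) (x i (-((n : ℤ) + 1))) := dist_comm _ _
          _ ≤ (2 : ℝ) ^ (n + 1) * prodDist (shiftMap (x (i - 1))) (x i) := h0
          _ ≤ (2 : ℝ) ^ (n + 1) * B := by
              apply mul_le_mul_of_nonneg_left hε (by positivity)
      have hih := ih (i - 1) (fun m hm hm' => h m (by push_cast at hm ⊢; omega) (by omega))
      have htri : dist (x i (-((n : ℕ) + 1 : ℤ))) (x (i - ((n : ℕ) + 1 : ℤ)) 0)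
          ≤ dist (x i (-((n : ℤ) + 1))) (x (i - 1) (-(n : ℤ))) +
            dist (x (i - 1) (-(n : ℤ))) (x (i - 1 - n) 0) := by
        have he1 : (-((n : ℕ) + 1 : ℤ)) = -((n : ℤ) + 1) := by push_cast; ring
        have he2 : i - ((n : ℕ) + 1 : ℤ) = i - 1 - n := by push_cast; ring
        rw [he1, he2]
        exact dist_triangle _ _ _
      have h2 : (n : ℝ) * 2 ^ n * B ≤ (n : ℝ) * 2 ^ (n + 1) * B := by
        apply mul_le_mul_of_nonneg_right _ hB
        apply mul_le_mul_of_nonneg_left _ (by positivity)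
        apply pow_le_pow_right₀ (by norm_num) (by omega)
      calc dist (x i (-((n : ℕ) + 1 : ℤ))) (x (i - ((n : ℕ) + 1 : ℤ)) 0)
          ≤ 2 ^ (n + 1) * B + (n : ℝ) * 2 ^ n * B := by
            push_cast at htri ⊢
            linarith [htri, hih]
        _ ≤ 2 ^ (n + 1) * B + (n : ℝ) * 2 ^ (n + 1) * B := by linarith
        _ = ((n : ℝ) + 1) * 2 ^ (n + 1) * B := by ring
        _ = ((n + 1 : ℕ) : ℝ) * 2 ^ (n + 1) * B := by push_cast; ring

end Aux

/-- For a compact metric space `X` with `d ≤ 1`, the shift map on `X^ℤ` (with the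
metric `D`, which induces the product topology) is a homeomorphism and has the
two-sided limit shadowing property. -/
theorem stmt18 {X : Type*} [MetricSpace X] [CompactSpace X]
    (hd : ∀ x y : X, dist x y ≤ 1) :
    IsHomeomorph (⇑(shiftMap (X := X))) ∧
    (∀ x : ℤ → (ℤ → X),
      Tendsto (fun i : ℤ => prodDist (shiftMap (x i)) (x (i + 1))) cofinite (𝓝 0) →
      ∃ y : ℤ → X,
        Tendsto (fun i : ℤ => prodDist ((shiftMap ^ i) y) (x i)) cofinite (𝓝 0)) := by
  constructor
  · have hcont : Continuous (⇑(shiftMap (X := X))) :=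
      continuous_pi fun n => continuous_apply (n + 1)
    have hcont' : Continuous (⇑(shiftMap (X := X)).symm) :=
      continuous_pi fun n => continuous_apply (n - 1)
    exact (Homeomorph.mk shiftMap hcont hcont').isHomeomorph
  · intro x hx
    refine ⟨fun n => x n 0, ?_⟩
    rw [Metric.tendsto_nhds]
    intro δ hδ
    -- choose N with (1/2)^N < δ/2
    obtain ⟨N, hN⟩ : ∃ N : ℕ, (1 / 2 : ℝ) ^ N < δ / 2 :=
      exists_pow_lt_of_lt_one (by linarith) (by norm_num)
    set η : ℝ := (δ / 2) / ((N : ℝ) * 2 ^ N + 1) with hη_def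
    have hηpos : 0 < η := by
      apply div_pos (by linarith)
      positivity
    -- eventually all nearby ε are ≤ η
    have hev : ∀ᶠ i : ℤ in cofinite, ∀ k ∈ Finset.Icc (-(N : ℤ)) (N : ℤ),
        prodDist (shiftMap (x (i + k))) (x (i + k + 1)) ≤ η := by
      rw [Filter.eventually_all_finset]
      intro k _
      have htr : Tendsto (fun i : ℤ => i + k) cofinite cofinite :=
        (add_left_injective k).tendsto_cofinite
      have := (hx.comp htr)
      have h2 := (Metric.tendsto_nhds.mp this) η hηpos
      filter_upwards [h2] with i hi
      have : |prodDist (shiftMap (x (i + k))) (x (i + k + 1))| < η := by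
        simpa [Real.dist_eq, Function.comp] using hi
      exact le_of_lt ((le_abs_self _).trans_lt this)
    filter_upwards [hev] with i hi
    rw [Real.dist_eq, sub_zero, abs_of_nonneg (prodDist_nonneg hd _ _)]
    have hmain : prodDist ((shiftMap ^ i) (fun n => x n 0)) (x i) ≤ δ / 2 := by
      apply ciSup_le
      intro j
      by_cases hj : |j| ≤ (N : ℤ)
      · -- coordinate estimate
        have hj' := abs_le.mp hj
        have hcoord : dist (((shiftMap ^ i) fun n => x n 0) j) (x i j) ≤ δ / 2 := by
          rw [shiftMap_pow_apply]
          have key : dist (x i j) (x (j + i) 0) ≤ (N : ℝ) * 2 ^ N * η := by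
            rcases le_or_gt 0 j with hj0 | hj0
            · -- forward case
              have hjn : j = (j.toNat : ℤ) := (Int.toNat_of_nonneg hj0).symm
              have hle : j.toNat ≤ N := by omega
              have hf := forward_est hd x (le_of_lt hηpos) j.toNat i (fun m hm hm' => by
                have hk := hi (m - i) (by rw [Finset.mem_Icc]; omega)
                rwa [show i + (m - i) = m by ring] at hk)
              rw [← hjn, show i + j = j + i by ring] at hf
              refine hf.trans ?_
              have : (j.toNat : ℝ) * 2 ^ j.toNat ≤ (N : ℝ) * 2 ^ N := by
                apply mul_le_mul (by exact_mod_cast hle)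
                  (pow_le_pow_right₀ (by norm_num) hle) (by positivity) (by positivity)
              apply mul_le_mul_of_nonneg_right this (le_of_lt hηpos)
            · -- backward case
              have hjn : j = -((-j).toNat : ℤ) := by omega
              have hle : (-j).toNat ≤ N := by omega
              have hf := backward_est hd x (le_of_lt hηpos) (-j).toNat i (fun m hm hm' => by
                have hk := hi (m - i) (by rw [Finset.mem_Icc]; omega)
                rwa [show i + (m - i) = m by ring] at hk)
              rw [show i - ((-j).toNat : ℤ) = j + i by omega, ← hjn] at hf
              refine hf.trans ?_
              have : ((-j).toNat : ℝ) * 2 ^ (-j).toNat ≤ (N : ℝ) * 2 ^ N := by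
                apply mul_le_mul (by exact_mod_cast hle)
                  (pow_le_pow_right₀ (by norm_num) hle) (by positivity) (by positivity)
              apply mul_le_mul_of_nonneg_right this (le_of_lt hηpos)
          have hbound : (N : ℝ) * 2 ^ N * η ≤ δ / 2 := by
            have hden : (0 : ℝ) < (N : ℝ) * 2 ^ N + 1 := by positivity
            have h1 : (N : ℝ) * 2 ^ N * η ≤ ((N : ℝ) * 2 ^ N + 1) * η := by nlinarith
            have h2 : ((N : ℝ) * 2 ^ N + 1) * η = δ / 2 := by
              rw [hη_def]; field_simp
            linarith
          rw [dist_comm] at key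
          exact key.trans hbound
        calc dist (((shiftMap ^ i) fun n => x n 0) j) (x i j) / (2 : ℝ) ^ |j|
            ≤ dist (((shiftMap ^ i) fun n => x n 0) j) (x i j) :=
              div_le_self dist_nonneg (one_le_zpow₀ (by norm_num) (abs_nonneg j))
          _ ≤ δ / 2 := hcoord
      · -- tail estimate
        push_neg at hj
        have h2N : (2 : ℝ) ^ ((N : ℤ)) ≤ (2 : ℝ) ^ |j| :=
          zpow_le_zpow_right₀ (by norm_num) (le_of_lt hj)
        have hpos : (0 : ℝ) < (2 : ℝ) ^ |j| := by positivity
        have hposN : (0 : ℝ) < (2 : ℝ) ^ ((N : ℤ)) := by positivity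
        calc dist (((shiftMap ^ i) fun n => x n 0) j) (x i j) / (2 : ℝ) ^ |j|
            ≤ 1 / (2 : ℝ) ^ |j| := by
              gcongr
              exact hd _ _
          _ ≤ 1 / (2 : ℝ) ^ ((N : ℤ)) := by
              apply one_div_le_one_div_of_le hposN h2N
          _ = (1 / 2 : ℝ) ^ N := by
              rw [zpow_natCast, one_div_pow]
          _ ≤ δ / 2 := le_of_lt hN
    linarith
end
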